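/- For every real q > 0 and integers n > s ≥ 2, the product ∏_{m=s}^{n-1} m/(m+q) ≤ ((s+q)/(n+q))^q. -/

import Mathlib

open Finset

lemma telescope_aux (q : ℝ) (hq : 0 < q) (s : ℕ) :
    ∀ n, s ≤ n → ∏ m ∈ Finset.Ico s n, (((m : ℝ) + q) / ((m : ℝ) + 1 + q))
      = ((s : ℝ) + q) / ((n : ℝ) + q) := by
  intro n hn
  induction n with
  | zero =>
    interval_cases s
    simp [div_self hq.ne']
  | succ n ih =>
    rcases Nat.lt_or_ge s (n + 1) with h | h
    · have hsn : s ≤ n := Nat.lt_succ_iff.mp h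
      rw [Finset.prod_Ico_succ_top hsn, ih hsn]
      have h1 : (n : ℝ) + q ≠ 0 := by positivity
      have h2 : (n : ℝ) + 1 + q ≠ 0 := by positivity
      push_cast
      field_simp
    · have : s = n + 1 := le_antisymm hn h
      subst this
      rw [Finset.Ico_self, Finset.prod_empty, div_self (by positivity)]

lemma pointwise_aux (q : ℝ) (hq : 0 < q) (m : ℕ) (hm : 1 ≤ m) :
    (m : ℝ) / ((m : ℝ) + q) ≤ (((m : ℝ) + q) / ((m : ℝ) + 1 + q)) ^ q := by
  have hmq : (0:ℝ) < (m : ℝ) + q := by positivity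
  have hmq1 : (0:ℝ) < (m : ℝ) + 1 + q := by positivity
  have hratio : (0:ℝ) < ((m : ℝ) + q) / ((m : ℝ) + 1 + q) := by positivity
  have h1 : (m : ℝ) / ((m : ℝ) + q) = 1 - q / ((m : ℝ) + q) := by
    field_simp
    ring
  have h2 : 1 - q / ((m : ℝ) + q) ≤ Real.exp (-(q / ((m : ℝ) + q))) := by
    have := Real.add_one_le_exp (-(q / ((m : ℝ) + q)))
    linarith
  have h3 : Real.exp (-(q / ((m : ℝ) + q)))
      ≤ (((m : ℝ) + q) / ((m : ℝ) + 1 + q)) ^ q := by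
    rw [← Real.exp_log hratio, ← Real.exp_mul, Real.exp_le_exp]
    have hlog : Real.log (((m : ℝ) + 1 + q) / ((m : ℝ) + q)) ≤ 1 / ((m : ℝ) + q) := by
      have := Real.log_le_sub_one_of_pos (x := ((m : ℝ) + 1 + q) / ((m : ℝ) + q))
        (by positivity)
      have heq : ((m : ℝ) + 1 + q) / ((m : ℝ) + q) - 1 = 1 / ((m : ℝ) + q) := by
        field_simp
        ring
      linarith [this, heq ▸ this]
    have hloginv : Real.log (((m : ℝ) + q) / ((m : ℝ) + 1 + q))
        = - Real.log (((m : ℝ) + 1 + q) / ((m : ℝ) + q)) := by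
      rw [← Real.log_inv]
      congr 1
      field_simp
    rw [hloginv]
    have h4 : q * Real.log (((m : ℝ) + 1 + q) / ((m : ℝ) + q)) ≤ q * (1 / ((m : ℝ) + q)) :=
      mul_le_mul_of_nonneg_left hlog hq.le
    have h5 : q * (1 / ((m : ℝ) + q)) = q / ((m : ℝ) + q) := by ring
    nlinarith
  calc (m : ℝ) / ((m : ℝ) + q) = 1 - q / ((m : ℝ) + q) := h1
    _ ≤ Real.exp (-(q / ((m : ℝ) + q))) := h2
    _ ≤ _ := h3

/-- For every real `q > 0` and integers `n > s ≥ 2`,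
`∏_{m=s}^{n-1} m/(m+q) ≤ ((s+q)/(n+q))^q` (real power). -/
theorem product_estimate (q : ℝ) (hq : 0 < q) (s n : ℕ) (hs : 2 ≤ s) (hn : s < n) :
    ∏ m ∈ Finset.Ico s n, ((m : ℝ) / ((m : ℝ) + q))
      ≤ (((s : ℝ) + q) / ((n : ℝ) + q)) ^ q := by
  have step : ∏ m ∈ Finset.Ico s n, ((m : ℝ) / ((m : ℝ) + q))
      ≤ ∏ m ∈ Finset.Ico s n, ((((m : ℝ) + q) / ((m : ℝ) + 1 + q)) ^ q) := by
    apply Finset.prod_le_prod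
    · intro m _
      positivity
    · intro m hm
      have hm1 : 1 ≤ m := le_trans (le_trans (by norm_num) hs) (Finset.mem_Ico.mp hm).1
      exact pointwise_aux q hq m hm1
  have heq : ∏ m ∈ Finset.Ico s n, ((((m : ℝ) + q) / ((m : ℝ) + 1 + q)) ^ q)
      = (((s : ℝ) + q) / ((n : ℝ) + q)) ^ q := by
    rw [Real.finset_prod_rpow _ _ (fun m _ => by positivity),
      telescope_aux q hq s n hn.le]
  linarith [step, heq ▸ step]
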